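/- Let μ > 1, let 0 < α₁ < α₂ < 1 and c₁, c₂ > 0 be real numbers, and let R₁, R₂ : ℕ → ℝ be nonnegative with R_m(0) = 0 and R_m(n)·n^μ·α_m^n → c_m as n → ∞ for m = 1, 2. Fix an integer j ≥ 1 and define β_m(n) to be the coefficient of z^n in (∑_k R_m(k)z^k)^j·(1−z)^{−(j+1)}. Set λ := ln(α₁)/ln(α₂) and x_n := ⌊n(λ−1)⌋. Then there exist real constants 0 < b₁ ≤ b₂ and N ∈ ℕ such that for all n ≥ N, b₁ ≤ β₂(n + x_n)/β₁(n) ≤ b₂. -/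

import Mathlib

open Filter Finset PowerSeries

/-- The key p-series sum constant. -/
noncomputable def Kc (μ : ℝ) : ℝ := 2 * 2 ^ μ * ∑' i : ℕ, (i : ℝ) ^ (-μ)

lemma Kc_nonneg (μ : ℝ) (hμ : 1 < μ) : 0 ≤ Kc μ := by
  have hs : Summable (fun i : ℕ => (i : ℝ) ^ (-μ)) :=
    Real.summable_nat_rpow.2 (by linarith)
  have : 0 ≤ ∑' i : ℕ, (i : ℝ) ^ (-μ) :=
    tsum_nonneg fun i => Real.rpow_nonneg (Nat.cast_nonneg i) _
  have h2 : (0:ℝ) ≤ 2 * 2 ^ μ := by positivity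
  exact mul_nonneg h2 this

lemma aux_sum_anti (μ : ℝ) (hμ : 1 < μ) {n : ℕ} (hn : 1 ≤ n) :
    ∑ p ∈ Finset.HasAntidiagonal.antidiagonal n, (p.1 : ℝ) ^ (-μ) * (p.2 : ℝ) ^ (-μ)
      ≤ Kc μ * (n : ℝ) ^ (-μ) := by
  have hs : Summable (fun i : ℕ => (i : ℝ) ^ (-μ)) :=
    Real.summable_nat_rpow.2 (by linarith)
  have hnn : ∀ i : ℕ, 0 ≤ (i : ℝ) ^ (-μ) := fun i => Real.rpow_nonneg (Nat.cast_nonneg i) _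
  set S : ℝ := ∑' i : ℕ, (i : ℝ) ^ (-μ) with hS
  -- per-term bound
  have hterm : ∀ p ∈ Finset.HasAntidiagonal.antidiagonal n,
      (p.1 : ℝ) ^ (-μ) * (p.2 : ℝ) ^ (-μ)
        ≤ (2 ^ μ * (n : ℝ) ^ (-μ)) * ((p.1 : ℝ) ^ (-μ) + (p.2 : ℝ) ^ (-μ)) := by
    intro p hp
    rw [Finset.HasAntidiagonal.mem_antidiagonal] at hp
    have key : ∀ a b : ℕ, a + b = n → a ≤ b →
        (a : ℝ) ^ (-μ) * (b : ℝ) ^ (-μ)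
          ≤ (2 ^ μ * (n : ℝ) ^ (-μ)) * ((a : ℝ) ^ (-μ) + (b : ℝ) ^ (-μ)) := by
      intro a b hab hle
      have hb1 : 1 ≤ b := by omega
      have hnb : (n : ℝ) / 2 ≤ (b : ℝ) := by
        have : (n : ℕ) ≤ 2 * b := by omega
        have := (Nat.cast_le (α := ℝ)).2 this
        push_cast at this ⊢
        linarith
      have hbb : (b : ℝ) ^ (-μ) ≤ ((n : ℝ) / 2) ^ (-μ) :=
        Real.rpow_le_rpow_of_nonpos (by positivity) hnb (by linarith)
      have hhalf : ((n : ℝ) / 2) ^ (-μ) = 2 ^ μ * (n : ℝ) ^ (-μ) := by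
        rw [div_eq_mul_inv, Real.mul_rpow (by positivity) (by positivity),
          Real.inv_rpow (by norm_num), ← Real.rpow_neg (by norm_num), neg_neg]
        ring
      calc (a : ℝ) ^ (-μ) * (b : ℝ) ^ (-μ)
          ≤ (a : ℝ) ^ (-μ) * (2 ^ μ * (n : ℝ) ^ (-μ)) := by
            rw [hhalf] at hbb; exact mul_le_mul_of_nonneg_left hbb (hnn a)
        _ ≤ (2 ^ μ * (n : ℝ) ^ (-μ)) * ((a : ℝ) ^ (-μ) + (b : ℝ) ^ (-μ)) := by
            have h2 : (0:ℝ) ≤ 2 ^ μ * (n : ℝ) ^ (-μ) := by positivity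
            nlinarith [hnn a, hnn b]
    rcases le_total p.1 p.2 with h | h
    · exact key p.1 p.2 hp h
    · have := key p.2 p.1 (by omega) h
      calc (p.1 : ℝ) ^ (-μ) * (p.2 : ℝ) ^ (-μ)
          = (p.2 : ℝ) ^ (-μ) * (p.1 : ℝ) ^ (-μ) := by ring
        _ ≤ (2 ^ μ * (n : ℝ) ^ (-μ)) * ((p.2 : ℝ) ^ (-μ) + (p.1 : ℝ) ^ (-μ)) := this
        _ = (2 ^ μ * (n : ℝ) ^ (-μ)) * ((p.1 : ℝ) ^ (-μ) + (p.2 : ℝ) ^ (-μ)) := by ring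
  have hsum1 : ∑ p ∈ Finset.HasAntidiagonal.antidiagonal n, (p.1 : ℝ) ^ (-μ) ≤ S := by
    rw [Finset.Nat.sum_antidiagonal_eq_sum_range_succ_mk]
    exact Summable.sum_le_tsum _ (fun i _ => hnn i) hs
  have hsum2 : ∑ p ∈ Finset.HasAntidiagonal.antidiagonal n, (p.2 : ℝ) ^ (-μ) ≤ S := by
    rw [Finset.Nat.sum_antidiagonal_eq_sum_range_succ_mk]
    have hrefl := Finset.sum_range_reflect (fun i : ℕ => (i : ℝ) ^ (-μ)) (n+1)
    simp only [Nat.add_sub_cancel] at hrefl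
    rw [hrefl]
    exact Summable.sum_le_tsum _ (fun i _ => hnn i) hs
  calc ∑ p ∈ Finset.HasAntidiagonal.antidiagonal n, (p.1 : ℝ) ^ (-μ) * (p.2 : ℝ) ^ (-μ)
      ≤ ∑ p ∈ Finset.HasAntidiagonal.antidiagonal n,
          (2 ^ μ * (n : ℝ) ^ (-μ)) * ((p.1 : ℝ) ^ (-μ) + (p.2 : ℝ) ^ (-μ)) :=
        Finset.sum_le_sum hterm
    _ = (2 ^ μ * (n : ℝ) ^ (-μ)) * (∑ p ∈ Finset.HasAntidiagonal.antidiagonal n, (p.1 : ℝ) ^ (-μ)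
          + ∑ p ∈ Finset.HasAntidiagonal.antidiagonal n, (p.2 : ℝ) ^ (-μ)) := by
        rw [← Finset.mul_sum, Finset.sum_add_distrib]
    _ ≤ (2 ^ μ * (n : ℝ) ^ (-μ)) * (S + S) := by
        have h2 : (0:ℝ) ≤ 2 ^ μ * (n : ℝ) ^ (-μ) := by positivity
        exact mul_le_mul_of_nonneg_left (by linarith) h2
    _ = Kc μ * (n : ℝ) ^ (-μ) := by rw [Kc]; ring


lemma conv_bound (μ : ℝ) (hμ : 1 < μ) {α γ : ℝ} (hα : 0 < α) (hαγ : α ≤ γ)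
    {f g : ℕ → ℝ} {Cf Cg : ℝ} (hCf : 0 ≤ Cf) (hCg : 0 ≤ Cg)
    (hf0 : ∀ n, 0 ≤ f n) (hg0 : ∀ n, 0 ≤ g n)
    (hf : ∀ n, f n ≤ Cf * (n : ℝ) ^ (-μ) * (α ^ n)⁻¹)
    (hg : ∀ n, g n ≤ Cg * (n : ℝ) ^ (-μ) * (γ ^ n)⁻¹) (n : ℕ) :
    ∑ p ∈ Finset.HasAntidiagonal.antidiagonal n, f p.1 * g p.2
      ≤ (Cf * Cg * Kc μ) * (n : ℝ) ^ (-μ) * (α ^ n)⁻¹ := by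
  have hγ : 0 < γ := lt_of_lt_of_le hα hαγ
  rcases Nat.eq_zero_or_pos n with rfl | hn
  · have hf0' : f 0 ≤ 0 := by
      have := hf 0
      rwa [Nat.cast_zero, Real.zero_rpow (by linarith), mul_zero, zero_mul] at this
    have : f 0 = 0 := le_antisymm hf0' (hf0 0)
    simp [this, Real.zero_rpow (show -μ ≠ 0 by linarith)]
  · have hterm : ∀ p ∈ Finset.HasAntidiagonal.antidiagonal n,
        f p.1 * g p.2 ≤ (Cf * Cg * (α ^ n)⁻¹) * ((p.1 : ℝ) ^ (-μ) * (p.2 : ℝ) ^ (-μ)) := by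
      intro p hp
      rw [Finset.HasAntidiagonal.mem_antidiagonal] at hp
      have h1 : f p.1 * g p.2 ≤ (Cf * (p.1 : ℝ) ^ (-μ) * (α ^ p.1)⁻¹) *
          (Cg * (p.2 : ℝ) ^ (-μ) * (γ ^ p.2)⁻¹) :=
        mul_le_mul (hf p.1) (hg p.2) (hg0 p.2) (by positivity)
      have h2 : (γ ^ p.2)⁻¹ ≤ (α ^ p.2)⁻¹ := by
        apply inv_anti₀ (by positivity)
        exact pow_le_pow_left₀ hα.le hαγ _
      have h3 : (Cf * (p.1 : ℝ) ^ (-μ) * (α ^ p.1)⁻¹) * (Cg * (p.2 : ℝ) ^ (-μ) * (γ ^ p.2)⁻¹)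
          ≤ (Cf * (p.1 : ℝ) ^ (-μ) * (α ^ p.1)⁻¹) * (Cg * (p.2 : ℝ) ^ (-μ) * (α ^ p.2)⁻¹) := by
        have hnn1 : (0:ℝ) ≤ Cf * (p.1 : ℝ) ^ (-μ) * (α ^ p.1)⁻¹ := by positivity
        have hnn2 : (0:ℝ) ≤ Cg * (p.2 : ℝ) ^ (-μ) := by positivity
        exact mul_le_mul_of_nonneg_left (mul_le_mul_of_nonneg_left h2 hnn2) hnn1
      have heq : (Cf * (p.1 : ℝ) ^ (-μ) * (α ^ p.1)⁻¹) * (Cg * (p.2 : ℝ) ^ (-μ) * (α ^ p.2)⁻¹)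
          = (Cf * Cg * (α ^ n)⁻¹) * ((p.1 : ℝ) ^ (-μ) * (p.2 : ℝ) ^ (-μ)) := by
        rw [← hp, pow_add, mul_inv]
        ring
      calc f p.1 * g p.2 ≤ _ := h1
        _ ≤ _ := h3
        _ = _ := heq
    calc ∑ p ∈ Finset.HasAntidiagonal.antidiagonal n, f p.1 * g p.2
        ≤ ∑ p ∈ Finset.HasAntidiagonal.antidiagonal n,
            (Cf * Cg * (α ^ n)⁻¹) * ((p.1 : ℝ) ^ (-μ) * (p.2 : ℝ) ^ (-μ)) :=
          Finset.sum_le_sum hterm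
      _ = (Cf * Cg * (α ^ n)⁻¹) *
            ∑ p ∈ Finset.HasAntidiagonal.antidiagonal n, (p.1 : ℝ) ^ (-μ) * (p.2 : ℝ) ^ (-μ) := by
          rw [Finset.mul_sum]
      _ ≤ (Cf * Cg * (α ^ n)⁻¹) * (Kc μ * (n : ℝ) ^ (-μ)) := by
          apply mul_le_mul_of_nonneg_left (aux_sum_anti μ hμ hn) (by positivity)
      _ = (Cf * Cg * Kc μ) * (n : ℝ) ^ (-μ) * (α ^ n)⁻¹ := by ring

lemma pow_coeff_nonneg {R : ℕ → ℝ} (hR : ∀ n, 0 ≤ R n) (k : ℕ) :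
    ∀ n, 0 ≤ PowerSeries.coeff n ((PowerSeries.mk R) ^ k) := by
  induction k with
  | zero => intro n; rw [pow_zero, PowerSeries.coeff_one]; positivity
  | succ k ih =>
      intro n
      rw [pow_succ, PowerSeries.coeff_mul]
      apply Finset.sum_nonneg
      intro p hp
      exact mul_nonneg (ih p.1) (by rw [PowerSeries.coeff_mk]; exact hR p.2)

lemma pow_coeff_upper (μ : ℝ) (hμ : 1 < μ) {α : ℝ} (hα : 0 < α) {R : ℕ → ℝ}
    (hR0 : R 0 = 0) (hR : ∀ n, 0 ≤ R n) {C : ℝ} (hC : 0 ≤ C)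
    (hCb : ∀ n, R n ≤ C * (n : ℝ) ^ (-μ) * (α ^ n)⁻¹) (k : ℕ) (hk : 1 ≤ k) :
    ∃ D : ℝ, 0 ≤ D ∧
      ∀ n, PowerSeries.coeff n ((PowerSeries.mk R) ^ k) ≤ D * (n : ℝ) ^ (-μ) * (α ^ n)⁻¹ := by
  induction k, hk using Nat.le_induction with
  | base =>
      refine ⟨C, hC, fun n => ?_⟩
      rw [pow_one, PowerSeries.coeff_mk]
      exact hCb n
  | succ k hk ih =>
      obtain ⟨D, hD, hDb⟩ := ih
      refine ⟨D * C * Kc μ, mul_nonneg (mul_nonneg hD hC) (Kc_nonneg μ hμ), fun n => ?_⟩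
      rw [pow_succ, PowerSeries.coeff_mul]
      have := conv_bound μ hμ hα le_rfl hD hC (pow_coeff_nonneg hR k) hR hDb hCb n
      simpa [PowerSeries.coeff_mk] using this

lemma pow_coeff_lower {R : ℕ → ℝ} (hR : ∀ n, 0 ≤ R n) (N₀ : ℕ) (k : ℕ) :
    ∀ n, R n * (R N₀) ^ k ≤ PowerSeries.coeff (n + k * N₀) ((PowerSeries.mk R) ^ (k + 1)) := by
  induction k with
  | zero => intro n; simp [PowerSeries.coeff_mk]
  | succ k ih =>
      intro n
      rw [pow_succ (PowerSeries.mk R) (k+1), PowerSeries.coeff_mul]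
      have hmem : ((n + k * N₀ : ℕ), N₀) ∈ Finset.HasAntidiagonal.antidiagonal (n + (k+1) * N₀) := by
        rw [Finset.HasAntidiagonal.mem_antidiagonal]; ring
      have hle : R n * R N₀ ^ (k+1) ≤
          PowerSeries.coeff (n + k * N₀) ((PowerSeries.mk R) ^ (k+1)) *
            PowerSeries.coeff N₀ (PowerSeries.mk R) := by
        rw [PowerSeries.coeff_mk, pow_succ, ← mul_assoc]
        exact mul_le_mul_of_nonneg_right (ih n) (hR N₀)
      refine hle.trans ?_
      apply Finset.single_le_sum (f := fun p : ℕ × ℕ =>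
        (PowerSeries.coeff p.1) ((PowerSeries.mk R) ^ (k+1)) *
          (PowerSeries.coeff p.2) (PowerSeries.mk R)) ?_ hmem
      intro p hp
      exact mul_nonneg (pow_coeff_nonneg hR (k+1) p.1)
        (by rw [PowerSeries.coeff_mk]; exact hR p.2)

lemma one_sub_X_inv_pow (j : ℕ) :
    ((1 - PowerSeries.X : ℝ⟦X⟧)⁻¹) ^ (j + 1)
      = PowerSeries.mk (fun b => (Nat.choose (j + b) j : ℝ)) := by
  have hc : PowerSeries.constantCoeff (1 - PowerSeries.X : ℝ⟦X⟧) ≠ 0 := by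
    simp
  have h1 : (PowerSeries.mk 1 : ℝ⟦X⟧) = (1 - PowerSeries.X)⁻¹ :=
    (PowerSeries.eq_inv_iff_mul_eq_one hc).2 (PowerSeries.mk_one_mul_one_sub_eq_one ℝ)
  rw [← h1, PowerSeries.mk_one_pow_eq_mk_choose_add]

/-- Bound on the "shifted" binomial coefficients by a subgeometric sequence. -/
lemma choose_tail_bound (μ : ℝ) (hμ : 1 < μ) {γ : ℝ} (hγ0 : 0 < γ) (hγ1 : γ < 1) (j : ℕ) :
    ∃ D : ℝ, 0 ≤ D ∧ ∀ b : ℕ, 1 ≤ b →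
      ((Nat.choose (j + b) j : ℕ) : ℝ) ≤ D * (b : ℝ) ^ (-μ) * (γ ^ b)⁻¹ := by
  set k : ℕ := j + ⌈μ⌉₊ with hk
  have hsum : Summable (fun b : ℕ => (b : ℝ) ^ k * γ ^ b) := by
    have : ‖γ‖ < 1 := by rw [Real.norm_eq_abs, abs_of_pos hγ0]; exact hγ1
    exact summable_pow_mul_geometric_of_norm_lt_one k this
  have htend := hsum.tendsto_atTop_zero
  obtain ⟨M, hM⟩ := htend.bddAbove_range
  have hMb : ∀ b : ℕ, (b : ℝ) ^ k * γ ^ b ≤ M := fun b => hM ⟨b, rfl⟩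
  refine ⟨((j : ℝ) + 1) ^ j * M, ?_, ?_⟩
  · have : (0:ℝ) ≤ (1 : ℝ) ^ k * γ ^ 1 := by positivity
    have hM0 : (0:ℝ) ≤ M := le_trans (by simpa using this) (hMb 1)
    positivity
  · intro b hb
    have hb0 : (0:ℝ) < (b : ℝ) := by exact_mod_cast hb
    have hb1 : (1:ℝ) ≤ (b : ℝ) := by exact_mod_cast hb
    -- choose (j+b) j ≤ (j+b)^j ≤ ((j+1)*b)^j
    have h1 : ((Nat.choose (j + b) j : ℕ) : ℝ) ≤ ((j : ℝ) + 1) ^ j * (b : ℝ) ^ j := by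
      have hc : (Nat.choose (j + b) j : ℕ) ≤ (j + b) ^ j := Nat.choose_le_pow _ _
      have hjb : ((j + b : ℕ) : ℝ) ^ j ≤ (((j : ℝ) + 1) * (b : ℝ)) ^ j := by
        apply pow_le_pow_left₀ (by positivity)
        push_cast
        nlinarith
      calc ((Nat.choose (j + b) j : ℕ) : ℝ) ≤ ((j + b : ℕ) : ℝ) ^ j := by
              exact_mod_cast hc
        _ ≤ (((j : ℝ) + 1) * (b : ℝ)) ^ j := hjb
        _ = ((j : ℝ) + 1) ^ j * (b : ℝ) ^ j := mul_pow _ _ _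
    -- b^j * b^μ ≤ b^k
    have h2 : (b : ℝ) ^ j * (b : ℝ) ^ μ ≤ (b : ℝ) ^ k := by
      have : (b : ℝ) ^ μ ≤ (b : ℝ) ^ (⌈μ⌉₊ : ℕ) := by
        rw [← Real.rpow_natCast (b : ℝ) ⌈μ⌉₊]
        exact Real.rpow_le_rpow_of_exponent_le hb1 (Nat.le_ceil μ)
      calc (b : ℝ) ^ j * (b : ℝ) ^ μ ≤ (b : ℝ) ^ j * (b : ℝ) ^ (⌈μ⌉₊ : ℕ) :=
            mul_le_mul_of_nonneg_left this (by positivity)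
        _ = (b : ℝ) ^ k := by rw [hk, pow_add]
    -- combine
    have hbμ : (0:ℝ) < (b : ℝ) ^ μ := Real.rpow_pos_of_pos hb0 _
    have hγb : (0:ℝ) < γ ^ b := by positivity
    rw [Real.rpow_neg hb0.le, ← div_eq_mul_inv, ← div_eq_mul_inv, le_div_iff₀ hγb, le_div_iff₀ hbμ]
    rw [show ((Nat.choose (j + b) j : ℕ) : ℝ) * γ ^ b * (b:ℝ) ^ μ
      = ((Nat.choose (j + b) j : ℕ) : ℝ) * (b:ℝ) ^ μ * γ ^ b by ring]
    calc ((Nat.choose (j + b) j : ℕ) : ℝ) * (b : ℝ) ^ μ * γ ^ b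
        ≤ (((j : ℝ) + 1) ^ j * (b : ℝ) ^ j) * (b : ℝ) ^ μ * γ ^ b := by
          have : (0:ℝ) ≤ γ ^ b := hγb.le
          apply mul_le_mul_of_nonneg_right (mul_le_mul_of_nonneg_right h1 hbμ.le) this
      _ = ((j : ℝ) + 1) ^ j * (((b : ℝ) ^ j * (b : ℝ) ^ μ) * γ ^ b) := by ring
      _ ≤ ((j : ℝ) + 1) ^ j * ((b : ℝ) ^ k * γ ^ b) := by
          apply mul_le_mul_of_nonneg_left (mul_le_mul_of_nonneg_right h2 hγb.le) (by positivity)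
      _ ≤ ((j : ℝ) + 1) ^ j * M := by
          apply mul_le_mul_of_nonneg_left (hMb b) (by positivity)

/-- Upper bound for the coefficients of `R(z)^j (1-z)^{-(j+1)}`. -/
lemma beta_upper (μ : ℝ) (hμ : 1 < μ) {α : ℝ} (hα : 0 < α) (hα1 : α < 1) {R : ℕ → ℝ}
    (hR0 : R 0 = 0) (hR : ∀ n, 0 ≤ R n) {C : ℝ} (hC : 0 ≤ C)
    (hCb : ∀ n, R n ≤ C * (n : ℝ) ^ (-μ) * (α ^ n)⁻¹) (j : ℕ) (hj : 1 ≤ j) :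
    ∃ K : ℝ, 0 ≤ K ∧ ∀ n, PowerSeries.coeff n
        ((PowerSeries.mk R) ^ j * ((1 - PowerSeries.X)⁻¹) ^ (j + 1))
      ≤ K * (n : ℝ) ^ (-μ) * (α ^ n)⁻¹ := by
  obtain ⟨Dj, hDj, hDjb⟩ := pow_coeff_upper μ hμ hα hR0 hR hC hCb j hj
  set γ : ℝ := (1 + α) / 2 with hγ
  have hγ0 : 0 < γ := by rw [hγ]; linarith
  have hγ1 : γ < 1 := by rw [hγ]; linarith
  have hαγ : α ≤ γ := by rw [hγ]; linarith
  obtain ⟨D, hD, hDb⟩ := choose_tail_bound μ hμ hγ0 hγ1 j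
  -- G' : tail of the binomial sequence
  set G' : ℕ → ℝ := fun b => if b = 0 then 0 else ((Nat.choose (j + b) j : ℕ) : ℝ) with hG'
  have hG'0 : ∀ b, 0 ≤ G' b := by
    intro b; rw [hG']; dsimp only; split <;> positivity
  have hG'b : ∀ b, G' b ≤ D * (b : ℝ) ^ (-μ) * (γ ^ b)⁻¹ := by
    intro b
    rw [hG']; dsimp only
    rcases Nat.eq_zero_or_pos b with rfl | hb
    · simp [Real.zero_rpow (show -μ ≠ 0 by linarith)]
    · rw [if_neg (by omega)]; exact hDb b hb
  have hKc := Kc_nonneg μ hμ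
  refine ⟨Dj * D * Kc μ + Dj, by positivity, fun n => ?_⟩
  rw [one_sub_X_inv_pow, PowerSeries.coeff_mul]
  have hsplit : ∀ p : ℕ × ℕ, p ∈ Finset.HasAntidiagonal.antidiagonal n →
      PowerSeries.coeff p.1 ((PowerSeries.mk R) ^ j) *
        PowerSeries.coeff p.2 (PowerSeries.mk (fun b => (Nat.choose (j + b) j : ℝ)))
      = PowerSeries.coeff p.1 ((PowerSeries.mk R) ^ j) * G' p.2
        + (if p.2 = 0 then PowerSeries.coeff p.1 ((PowerSeries.mk R) ^ j) else 0) := by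
    intro p hp
    rw [PowerSeries.coeff_mk, hG']
    dsimp only
    split
    · next h => simp [h]
    · next h => simp [h]
  rw [Finset.sum_congr rfl hsplit, Finset.sum_add_distrib]
  have hpart1 : ∑ p ∈ Finset.HasAntidiagonal.antidiagonal n,
      PowerSeries.coeff p.1 ((PowerSeries.mk R) ^ j) * G' p.2
      ≤ (Dj * D * Kc μ) * (n : ℝ) ^ (-μ) * (α ^ n)⁻¹ :=
    conv_bound μ hμ hα hαγ hDj hD (pow_coeff_nonneg hR j) hG'0 hDjb hG'b n
  have hpart2 : ∑ p ∈ Finset.HasAntidiagonal.antidiagonal n,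
      (if p.2 = 0 then PowerSeries.coeff p.1 ((PowerSeries.mk R) ^ j) else 0)
      = PowerSeries.coeff n ((PowerSeries.mk R) ^ j) := by
    rw [Finset.sum_eq_single_of_mem ((n, 0) : ℕ × ℕ) (by rw [Finset.HasAntidiagonal.mem_antidiagonal]; simp)]
    · simp
    · intro p hp hne
      rw [Finset.HasAntidiagonal.mem_antidiagonal] at hp
      have : p.2 ≠ 0 := by
        intro h
        apply hne
        have : p.1 = n := by omega
        rw [Prod.ext_iff]; exact ⟨this, h⟩
      rw [if_neg this]
  rw [hpart2]
  have := hDjb n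
  calc _ ≤ (Dj * D * Kc μ) * (n : ℝ) ^ (-μ) * (α ^ n)⁻¹ + Dj * (n : ℝ) ^ (-μ) * (α ^ n)⁻¹ :=
        add_le_add hpart1 this
    _ = (Dj * D * Kc μ + Dj) * (n : ℝ) ^ (-μ) * (α ^ n)⁻¹ := by ring

/-- Lower bound for the coefficients of `R(z)^j (1-z)^{-(j+1)}`. -/
lemma beta_lower (μ : ℝ) (hμ : 1 < μ) {α : ℝ} (hα : 0 < α) {R : ℕ → ℝ}
    (hR : ∀ n, 0 ≤ R n) {c : ℝ} (hc : 0 < c)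
    (hT : Tendsto (fun n : ℕ => R n * (n : ℝ) ^ μ * α ^ n) atTop (nhds c))
    (j : ℕ) (hj : 1 ≤ j) :
    ∃ k : ℝ, 0 < k ∧ ∃ N : ℕ, 1 ≤ N ∧ ∀ m, N ≤ m →
      k * (m : ℝ) ^ (-μ) * (α ^ m)⁻¹ ≤ PowerSeries.coeff m
        ((PowerSeries.mk R) ^ j * ((1 - PowerSeries.X)⁻¹) ^ (j + 1)) := by
  -- eventual lower bound on R
  have hev : ∀ᶠ n : ℕ in atTop, c / 2 < R n * (n : ℝ) ^ μ * α ^ n :=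
    hT.eventually (eventually_gt_nhds (by linarith))
  obtain ⟨N₀', hN₀'⟩ := eventually_atTop.1 hev
  set N₀ : ℕ := max N₀' 1 with hN₀def
  have hN₀1 : 1 ≤ N₀ := le_max_right _ _
  have hRlow : ∀ n, N₀ ≤ n → c / 2 * (n : ℝ) ^ (-μ) * (α ^ n)⁻¹ ≤ R n := by
    intro n hn
    have h := (hN₀' n (le_trans (le_max_left _ _) hn)).le
    have hn0 : (0:ℝ) < (n : ℝ) := by
      have : 1 ≤ n := le_trans hN₀1 hn
      exact_mod_cast this
    have hnμ : (0:ℝ) < (n : ℝ) ^ μ := Real.rpow_pos_of_pos hn0 _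
    have hαn : (0:ℝ) < α ^ n := by positivity
    rw [Real.rpow_neg hn0.le]
    rw [← sub_nonneg]
    have key : R n - c / 2 * ((n:ℝ) ^ μ)⁻¹ * (α ^ n)⁻¹ =
        (R n * (n : ℝ) ^ μ * α ^ n - c / 2) * ((n:ℝ) ^ μ)⁻¹ * (α ^ n)⁻¹ := by
      field_simp
    rw [key]
    have : 0 ≤ R n * (n : ℝ) ^ μ * α ^ n - c / 2 := by linarith
    positivity
  have hRN₀ : 0 < R N₀ := by
    have := hRlow N₀ le_rfl
    have h1 : (0:ℝ) < (N₀ : ℝ) := by exact_mod_cast hN₀1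
    have : (0:ℝ) < c / 2 * (N₀ : ℝ) ^ (-μ) * (α ^ N₀)⁻¹ := by
      have := Real.rpow_pos_of_pos h1 (-μ); positivity
    linarith [hRlow N₀ le_rfl]
  set s : ℕ := (j - 1) * N₀ with hs
  refine ⟨c / 2 * (R N₀) ^ (j - 1) * α ^ s, by positivity, j * N₀, by nlinarith [hN₀1, hj], ?_⟩
  intro m hm
  set n' : ℕ := m - s with hn'
  have hkey : (j - 1) * N₀ + N₀ = j * N₀ := by
    rcases Nat.exists_eq_add_of_le hj with ⟨i, rfl⟩
    have h : 1 + i - 1 = i := by omega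
    rw [h]; ring
  have hn'N₀ : N₀ ≤ n' := by
    rw [hn', hs]
    omega
  have hn's : n' + s = m := by
    rw [hn', hs]
    omega
  -- coefficient of the product is at least coefficient of the power (G 0 = 1)
  have hstep1 : PowerSeries.coeff m ((PowerSeries.mk R) ^ j)
      ≤ PowerSeries.coeff m
        ((PowerSeries.mk R) ^ j * ((1 - PowerSeries.X)⁻¹) ^ (j + 1)) := by
    rw [one_sub_X_inv_pow, PowerSeries.coeff_mul]
    have hmem : ((m, 0) : ℕ × ℕ) ∈ Finset.HasAntidiagonal.antidiagonal m := by
      rw [Finset.HasAntidiagonal.mem_antidiagonal]; simp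
    have hval : PowerSeries.coeff m ((PowerSeries.mk R) ^ j) =
        (PowerSeries.coeff (m,0).1) ((PowerSeries.mk R) ^ j) *
          (PowerSeries.coeff (m,0).2) (PowerSeries.mk (fun b => (Nat.choose (j + b) j : ℝ))) := by
      simp [PowerSeries.coeff_mk]
    rw [hval]
    apply Finset.single_le_sum (f := fun p : ℕ × ℕ =>
      (PowerSeries.coeff p.1) ((PowerSeries.mk R) ^ j) *
        (PowerSeries.coeff p.2) (PowerSeries.mk (fun b => (Nat.choose (j + b) j : ℝ)))) ?_ hmem
    intro p hp
    apply mul_nonneg (pow_coeff_nonneg hR j p.1)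
    rw [PowerSeries.coeff_mk]
    positivity
  -- lower bound on the coefficient of the power
  have hstep2 : R n' * (R N₀) ^ (j - 1) ≤ PowerSeries.coeff m ((PowerSeries.mk R) ^ j) := by
    have := pow_coeff_lower hR N₀ (j - 1) n'
    have hjj : j - 1 + 1 = j := by omega
    have hms : n' + (j - 1) * N₀ = m := by rw [← hs]; exact hn's
    rwa [hjj, hms] at this
  -- lower bound on R n'
  have hRn' := hRlow n' hn'N₀
  -- compare the weight at n' with the weight at m
  have hn'0 : (0:ℝ) < (n' : ℝ) := by
    have : 1 ≤ n' := le_trans hN₀1 hn'N₀; exact_mod_cast this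
  have hm0 : (0:ℝ) < (m : ℝ) := by
    have : n' ≤ m := by omega
    have : 1 ≤ m := by omega
    exact_mod_cast this
  have hw1 : (m : ℝ) ^ (-μ) ≤ (n' : ℝ) ^ (-μ) := by
    apply Real.rpow_le_rpow_of_nonpos hn'0 (by exact_mod_cast Nat.cast_le.2 (show n' ≤ m by omega)) (by linarith)
  have hw2 : (α ^ n')⁻¹ = α ^ s * (α ^ m)⁻¹ := by
    have : α ^ n' * α ^ s = α ^ m := by rw [← pow_add, hn's]
    field_simp
    linarith [this]
  calc c / 2 * (R N₀) ^ (j-1) * α ^ s * (m : ℝ) ^ (-μ) * (α ^ m)⁻¹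
      ≤ c / 2 * (R N₀) ^ (j-1) * α ^ s * (n' : ℝ) ^ (-μ) * (α ^ m)⁻¹ := by
        have h1 : (0:ℝ) ≤ c / 2 * (R N₀) ^ (j-1) * α ^ s := by positivity
        have h2 : (0:ℝ) ≤ (α ^ m)⁻¹ := by positivity
        apply mul_le_mul_of_nonneg_right (mul_le_mul_of_nonneg_left hw1 h1) h2
    _ = (c / 2 * (n' : ℝ) ^ (-μ) * (α ^ n')⁻¹) * (R N₀) ^ (j-1) := by
        rw [hw2]; ring
    _ ≤ R n' * (R N₀) ^ (j-1) := by
        apply mul_le_mul_of_nonneg_right hRn' (by positivity)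
    _ ≤ _ := le_trans hstep2 hstep1

/-- Extract a global coefficient bound from the convergence hypothesis. -/
lemma R_global_bound (μ : ℝ) (hμ : 1 < μ) {α : ℝ} (hα : 0 < α) {R : ℕ → ℝ}
    (hR0 : R 0 = 0) {c : ℝ}
    (hT : Tendsto (fun n : ℕ => R n * (n : ℝ) ^ μ * α ^ n) atTop (nhds c)) :
    ∃ C : ℝ, 0 ≤ C ∧ ∀ n, R n ≤ C * (n : ℝ) ^ (-μ) * (α ^ n)⁻¹ := by
  obtain ⟨C, hC⟩ := hT.bddAbove_range
  have hCb : ∀ n : ℕ, R n * (n : ℝ) ^ μ * α ^ n ≤ C := fun n => hC ⟨n, rfl⟩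
  have hC0 : 0 ≤ C := by
    have := hCb 0
    rw [Nat.cast_zero, Real.zero_rpow (by linarith), mul_zero, zero_mul] at this
    linarith
  refine ⟨C, hC0, fun n => ?_⟩
  rcases Nat.eq_zero_or_pos n with rfl | hn
  · rw [hR0, Nat.cast_zero, Real.zero_rpow (show -μ ≠ 0 by linarith), mul_zero, zero_mul]
  · have hn0 : (0:ℝ) < (n : ℝ) := by exact_mod_cast hn
    have hnμ : (0:ℝ) < (n : ℝ) ^ μ := Real.rpow_pos_of_pos hn0 _
    have hαn : (0:ℝ) < α ^ n := by positivity
    rw [Real.rpow_neg hn0.le, ← sub_nonneg]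
    have key : C * ((n:ℝ) ^ μ)⁻¹ * (α ^ n)⁻¹ - R n =
        (C - R n * (n : ℝ) ^ μ * α ^ n) * ((n:ℝ) ^ μ)⁻¹ * (α ^ n)⁻¹ := by
      field_simp
    rw [key]
    have : 0 ≤ C - R n * (n : ℝ) ^ μ * α ^ n := by linarith [hCb n]
    positivity

/- Proposition 2, eq. (6) (E:elongirre): with `λ = ln α₁ / ln α₂` and
`x_n = ⌊n(λ-1)⌋`, the counts `β_m(n) = [z^n] R_m(z)^j (1-z)^{-(j+1)}` of
structures with exactly `j` irreducible substructures satisfy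
`β₂(n + x_n) ≈ β₁(n)` up to bounded positive multiplicative factors. -/
theorem stmt_6 (μ α₁ α₂ c₁ c₂ : ℝ) (hμ : 1 < μ)
    (hα₁ : 0 < α₁) (hα : α₁ < α₂) (hα₂ : α₂ < 1) (hc₁ : 0 < c₁) (hc₂ : 0 < c₂)
    (R₁ R₂ : ℕ → ℝ) (h₁0 : R₁ 0 = 0) (h₂0 : R₂ 0 = 0)
    (h₁pos : ∀ n, 0 ≤ R₁ n) (h₂pos : ∀ n, 0 ≤ R₂ n)
    (h₁ : Tendsto (fun n : ℕ => R₁ n * (n : ℝ) ^ μ * α₁ ^ n) atTop (nhds c₁))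
    (h₂ : Tendsto (fun n : ℕ => R₂ n * (n : ℝ) ^ μ * α₂ ^ n) atTop (nhds c₂))
    (j : ℕ) (hj : 1 ≤ j)
    (β₁ β₂ : ℕ → ℝ)
    (hβ₁ : ∀ n, β₁ n = PowerSeries.coeff n
      ((PowerSeries.mk R₁) ^ j * ((1 - PowerSeries.X)⁻¹) ^ (j + 1)))
    (hβ₂ : ∀ n, β₂ n = PowerSeries.coeff n
      ((PowerSeries.mk R₂) ^ j * ((1 - PowerSeries.X)⁻¹) ^ (j + 1)))
    (lam : ℝ) (hlam : lam = Real.log α₁ / Real.log α₂)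
    (x : ℕ → ℕ) (hx : ∀ n, x n = ⌊(n : ℝ) * (lam - 1)⌋₊) :
    ∃ b₁ b₂ : ℝ, 0 < b₁ ∧ b₁ ≤ b₂ ∧ ∃ N : ℕ, ∀ n ≥ N,
      b₁ ≤ β₂ (n + x n) / β₁ n ∧ β₂ (n + x n) / β₁ n ≤ b₂ := by
  have hα₂0 : 0 < α₂ := lt_trans hα₁ hα
  have hα₁1 : α₁ < 1 := lt_trans hα hα₂
  -- logs
  have hlog₁ : Real.log α₁ < 0 := Real.log_neg hα₁ hα₁1
  have hlog₂ : Real.log α₂ < 0 := Real.log_neg hα₂0 hα₂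
  have hloglt : Real.log α₁ < Real.log α₂ := Real.log_lt_log hα₁ hα
  have hlam1 : 1 < lam := by
    rw [hlam, lt_div_iff_of_neg hlog₂]
    linarith
  have hlamlog : lam * Real.log α₂ = Real.log α₁ := by
    rw [hlam, div_mul_cancel₀ _ (ne_of_lt hlog₂)]
  -- global upper bounds on R₁, R₂, β₁, β₂
  obtain ⟨C₁, hC₁0, hC₁b⟩ := R_global_bound μ hμ hα₁ h₁0 h₁
  obtain ⟨C₂, hC₂0, hC₂b⟩ := R_global_bound μ hμ hα₂0 h₂0 h₂
  obtain ⟨K₁', hK₁0, hK₁b'⟩ := beta_upper μ hμ hα₁ hα₁1 h₁0 h₁pos hC₁0 hC₁b j hj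
  obtain ⟨K₂, hK₂0, hK₂b⟩ := beta_upper μ hμ hα₂0 hα₂ h₂0 h₂pos hC₂0 hC₂b j hj
  set K₁ : ℝ := K₁' + 1 with hK₁def
  have hK₁pos : 0 < K₁ := by positivity
  have hK₁b : ∀ n, PowerSeries.coeff n
      ((PowerSeries.mk R₁) ^ j * ((1 - PowerSeries.X)⁻¹) ^ (j + 1))
      ≤ K₁ * (n : ℝ) ^ (-μ) * (α₁ ^ n)⁻¹ := by
    intro n
    refine (hK₁b' n).trans ?_
    have : (0:ℝ) ≤ (n : ℝ) ^ (-μ) * (α₁ ^ n)⁻¹ := by positivity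
    rw [hK₁def, mul_assoc, mul_assoc]
    nlinarith
  -- lower bounds
  obtain ⟨k₁, hk₁0, N₁, hN₁1, hk₁b⟩ := beta_lower μ hμ hα₁ h₁pos hc₁ h₁ j hj
  obtain ⟨k₂, hk₂0, N₂, hN₂1, hk₂b⟩ := beta_lower μ hμ hα₂0 h₂pos hc₂ h₂ j hj
  set N : ℕ := max (max N₁ N₂) 1 with hNdef
  set b₁ : ℝ := k₂ * lam ^ (-μ) * α₂ / K₁ with hb₁def
  have hlam0 : (0:ℝ) < lam := by linarith
  have hb₁pos : 0 < b₁ := by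
    have := Real.rpow_pos_of_pos hlam0 (-μ)
    rw [hb₁def]; positivity
  refine ⟨b₁, max b₁ (K₂ / k₁), hb₁pos, le_max_left _ _, N, fun n hn => ?_⟩
  -- setup for a fixed n
  set m : ℕ := n + x n with hmdef
  have hn1 : 1 ≤ n := le_trans (le_max_right _ _) hn
  have hnN₁ : N₁ ≤ n := le_trans (le_trans (le_max_left _ _) (le_max_left _ _)) hn
  have hnN₂ : N₂ ≤ n := le_trans (le_trans (le_max_right _ _) (le_max_left _ _)) hn
  have hnm : n ≤ m := Nat.le_add_right _ _
  have hn0 : (0:ℝ) < (n : ℝ) := by exact_mod_cast hn1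
  have hm1 : 1 ≤ m := le_trans hn1 hnm
  have hm0 : (0:ℝ) < (m : ℝ) := by exact_mod_cast hm1
  -- floor inequalities
  have hfl : ((x n : ℕ) : ℝ) ≤ (n : ℝ) * (lam - 1) := by
    rw [hx n]
    exact Nat.floor_le (by nlinarith)
  have hfl2 : (n : ℝ) * (lam - 1) < ((x n : ℕ) : ℝ) + 1 := by
    rw [hx n]
    exact Nat.lt_floor_add_one _
  have hcast : ((m : ℕ) : ℝ) = (n : ℝ) + ((x n : ℕ) : ℝ) := by
    rw [hmdef]; push_cast; ring
  have hring : (n : ℝ) * (lam - 1) = (n : ℝ) * lam - (n : ℝ) := by ring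
  have hmlam : (m : ℝ) ≤ (n : ℝ) * lam := by
    rw [hcast]; linarith
  have hmlam2 : (n : ℝ) * lam < (m : ℝ) + 1 := by
    rw [hcast]; linarith
  -- exponential comparisons
  have hexp : ∀ (a : ℝ) (hA : 0 < a) (t : ℕ), a ^ t = Real.exp ((t : ℝ) * Real.log a) := by
    intro a hA t
    rw [Real.exp_nat_mul, Real.exp_log hA]
  have hE1 : α₁ ^ n ≤ α₂ ^ m := by
    rw [hexp α₁ hα₁ n, hexp α₂ hα₂0 m]
    apply Real.exp_le_exp.2
    have : (n : ℝ) * Real.log α₁ = ((n : ℝ) * lam) * Real.log α₂ := by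
      rw [mul_assoc, hlamlog]
    rw [this]
    exact mul_le_mul_of_nonpos_right hmlam hlog₂.le
  have hE2 : α₂ ^ (m + 1) ≤ α₁ ^ n := by
    rw [hexp α₁ hα₁ n, hexp α₂ hα₂0 (m+1)]
    apply Real.exp_le_exp.2
    have h : (n : ℝ) * Real.log α₁ = ((n : ℝ) * lam) * Real.log α₂ := by
      rw [mul_assoc, hlamlog]
    rw [h]
    have hc : ((m + 1 : ℕ) : ℝ) = (m : ℝ) + 1 := by push_cast; ring
    rw [hc]
    exact mul_le_mul_of_nonpos_right hmlam2.le hlog₂.le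
  -- weight comparisons
  have hW1 : (m : ℝ) ^ (-μ) ≤ (n : ℝ) ^ (-μ) :=
    Real.rpow_le_rpow_of_nonpos hn0 (by exact_mod_cast hnm) (by linarith)
  have hW2 : lam ^ (-μ) * (n : ℝ) ^ (-μ) ≤ (m : ℝ) ^ (-μ) := by
    have h1 : (m : ℝ) ^ (-μ) ≥ ((n : ℝ) * lam) ^ (-μ) :=
      Real.rpow_le_rpow_of_nonpos hm0 hmlam (by linarith)
    have h2 : ((n : ℝ) * lam) ^ (-μ) = (n : ℝ) ^ (-μ) * lam ^ (-μ) :=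
      Real.mul_rpow hn0.le hlam0.le
    rw [h2] at h1
    linarith
  -- positivity of weights
  have hT0 : (0:ℝ) < (n : ℝ) ^ (-μ) * (α₁ ^ n)⁻¹ := by
    have := Real.rpow_pos_of_pos hn0 (-μ); positivity
  have hα₁n : (0:ℝ) < α₁ ^ n := by positivity
  have hα₂m : (0:ℝ) < α₂ ^ m := by positivity
  -- inverse-power comparisons
  have hI1 : (α₂ ^ m)⁻¹ ≤ (α₁ ^ n)⁻¹ := inv_anti₀ hα₁n hE1
  have hI2 : α₂ * (α₁ ^ n)⁻¹ ≤ (α₂ ^ m)⁻¹ := by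
    have h := inv_anti₀ (show (0:ℝ) < α₂ ^ (m+1) by positivity) hE2
    rw [pow_succ, mul_inv] at h
    calc α₂ * (α₁ ^ n)⁻¹ ≤ α₂ * ((α₂ ^ m)⁻¹ * α₂⁻¹) :=
          mul_le_mul_of_nonneg_left h hα₂0.le
      _ = (α₂ ^ m)⁻¹ := by field_simp
  -- bounds on β₂ m and β₁ n
  have hβ₂up : β₂ m ≤ K₂ * ((n : ℝ) ^ (-μ) * (α₁ ^ n)⁻¹) := by
    rw [hβ₂ m]
    refine (hK₂b m).trans ?_
    rw [mul_assoc]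
    apply mul_le_mul_of_nonneg_left _ hK₂0
    have := Real.rpow_nonneg hm0.le (-μ)
    calc (m : ℝ) ^ (-μ) * (α₂ ^ m)⁻¹ ≤ (n : ℝ) ^ (-μ) * (α₂ ^ m)⁻¹ :=
          mul_le_mul_of_nonneg_right hW1 (by positivity)
      _ ≤ (n : ℝ) ^ (-μ) * (α₁ ^ n)⁻¹ :=
          mul_le_mul_of_nonneg_left hI1 (Real.rpow_nonneg hn0.le _)
  have hβ₂lo : (k₂ * lam ^ (-μ) * α₂) * ((n : ℝ) ^ (-μ) * (α₁ ^ n)⁻¹) ≤ β₂ m := by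
    rw [hβ₂ m]
    refine le_trans ?_ (hk₂b m (le_trans hnN₂ hnm))
    have hlamμ := Real.rpow_pos_of_pos hlam0 (-μ)
    have hnμ := Real.rpow_pos_of_pos hn0 (-μ)
    calc (k₂ * lam ^ (-μ) * α₂) * ((n : ℝ) ^ (-μ) * (α₁ ^ n)⁻¹)
        = k₂ * (lam ^ (-μ) * (n : ℝ) ^ (-μ)) * (α₂ * (α₁ ^ n)⁻¹) := by ring
      _ ≤ k₂ * (m : ℝ) ^ (-μ) * (α₂ ^ m)⁻¹ := by
          apply mul_le_mul
          · exact mul_le_mul_of_nonneg_left hW2 hk₂0.le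
          · exact hI2
          · positivity
          · positivity
  have hβ₁up : β₁ n ≤ K₁ * ((n : ℝ) ^ (-μ) * (α₁ ^ n)⁻¹) := by
    rw [hβ₁ n, ← mul_assoc]; exact hK₁b n
  have hβ₁lo : k₁ * ((n : ℝ) ^ (-μ) * (α₁ ^ n)⁻¹) ≤ β₁ n := by
    rw [hβ₁ n]
    have := hk₁b n hnN₁
    rw [← mul_assoc]
    exact this
  have hβ₁pos : 0 < β₁ n := lt_of_lt_of_le (by positivity) hβ₁lo
  constructor
  · -- lower bound on the ratio
    have h := div_le_div₀ (le_trans (by positivity) hβ₂lo) hβ₂lo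
      (by positivity : (0:ℝ) < k₁ * ((n : ℝ) ^ (-μ) * (α₁ ^ n)⁻¹)) le_rfl
    calc b₁ = (k₂ * lam ^ (-μ) * α₂) * ((n : ℝ) ^ (-μ) * (α₁ ^ n)⁻¹) /
          (K₁ * ((n : ℝ) ^ (-μ) * (α₁ ^ n)⁻¹)) := by
          rw [hb₁def, mul_div_mul_right _ _ (ne_of_gt hT0)]
      _ ≤ β₂ m / β₁ n :=
          div_le_div₀ (le_trans (by positivity) hβ₂lo) hβ₂lo hβ₁pos hβ₁up
  · -- upper bound on the ratio
    have h : β₂ m / β₁ n ≤ K₂ * ((n : ℝ) ^ (-μ) * (α₁ ^ n)⁻¹) /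
        (k₁ * ((n : ℝ) ^ (-μ) * (α₁ ^ n)⁻¹)) :=
      div_le_div₀ (by positivity) hβ₂up (by positivity) hβ₁lo
    refine le_trans h ?_
    rw [mul_div_mul_right _ _ (ne_of_gt hT0)]
    exact le_max_right _ _
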